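/- Let v, w be C³ functions of (x,y,z,t) with v_x w_y - v_y w_x nowhere zero, satisfying v_x v_{ty} - v_y v_{tx} + w_x v_{yz} - w_y v_{xz} = 0 and v_x w_{ty} - v_y w_{tx} + w_x w_{yz} - w_y w_{xz} = 0. Then for every λ ≠ 0 the vector fields X = λ∂_x + v_x ∂_t + w_x ∂_z and Y = λ∂_y + v_y ∂_t + w_y ∂_z commute: [X,Y] = 0. -/
import Mathlib


/-- Partial derivative on `ℝ⁴` with coordinates `(x,y,z,t) = (0,1,2,3)`. -/
noncomputable def pd (i : Fin 4) (f : (Fin 4 → ℝ) → ℝ) (p : Fin 4 → ℝ) : ℝ :=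
  fderiv ℝ f p (Pi.single i 1)

/-- Second partial derivative `f_{ij}`. -/
noncomputable def pdd (i j : Fin 4) (f : (Fin 4 → ℝ) → ℝ) : (Fin 4 → ℝ) → ℝ :=
  pd i (pd j f)


lemma pd_contDiff {f : (Fin 4 → ℝ) → ℝ} (hf : ContDiff ℝ 3 f) (j : Fin 4) :
    ContDiff ℝ 2 (pd j f) := by
  have h := (hf.fderiv_right (m := 2) (by norm_num))
  exact h.clm_apply contDiff_const

lemma clm_apply_eq_sum (L : ((Fin 4 → ℝ)) →L[ℝ] ℝ) (u : Fin 4 → ℝ) :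
    L u = ∑ i, u i * L (Pi.single i 1) := by
  conv_lhs => rw [← Finset.univ_sum_single u]
  rw [map_sum]
  congr 1; funext i
  have : (Pi.single i (u i) : Fin 4 → ℝ) = u i • (Pi.single i 1 : Fin 4 → ℝ) := by
    funext k
    rw [Pi.smul_apply, Pi.single_apply, Pi.single_apply]
    split <;> simp
  rw [this, map_smul, smul_eq_mul]

lemma pdd_symm {f : (Fin 4 → ℝ) → ℝ} (hf : ContDiff ℝ 3 f) (i j : Fin 4) (p : Fin 4 → ℝ) :
    pdd i j f p = pdd j i f p := by
  have hsym : IsSymmSndFDerivAt ℝ f p := (hf.contDiffAt).isSymmSndFDerivAt (by norm_num)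
  have hd : DifferentiableAt ℝ (fderiv ℝ f) p :=
    ((hf.fderiv_right (m := 2) (by norm_num)).differentiable (by norm_num)).differentiableAt
  have key : ∀ a b : Fin 4, pdd a b f p
      = (fderiv ℝ (fderiv ℝ f) p (Pi.single a 1)) (Pi.single b 1) := by
    intro a b
    have : pd b f = fun y => (fderiv ℝ f y) ((fun _ => (Pi.single b 1 : Fin 4 → ℝ)) y) := rfl
    show fderiv ℝ (pd b f) p (Pi.single a 1) = _
    rw [this, fderiv_clm_apply hd (differentiableAt_const _)]
    simp
  rw [key, key]
  exact hsym _ _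

/-- Commutator of vector fields on `ℝ⁴`. -/
noncomputable def lie4 (V W : (Fin 4 → ℝ) → (Fin 4 → ℝ)) (p : Fin 4 → ℝ) : Fin 4 → ℝ :=
  fderiv ℝ W p (V p) - fderiv ℝ V p (W p)

/-- For `C³` solutions `(v,w)` of the two-component generalization of the first
heavenly equation, with `v_x w_y - v_y w_x` nowhere zero, the Lax fields
`X = λ∂_x + v_x ∂_t + w_x ∂_z` and `Y = λ∂_y + v_y ∂_t + w_y ∂_z` commute for λ ≠ 0. -/
theorem two_component_first_heavenly_lax (v w : (Fin 4 → ℝ) → ℝ) (lam : ℝ) (hlam : lam ≠ 0)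
    (hv : ContDiff ℝ 3 v) (hw : ContDiff ℝ 3 w)
    (hnd : ∀ p, pd 0 v p * pd 1 w p - pd 1 v p * pd 0 w p ≠ 0)
    (heq1 : ∀ p, pd 0 v p * pdd 3 1 v p - pd 1 v p * pdd 3 0 v p
        + pd 0 w p * pdd 1 2 v p - pd 1 w p * pdd 0 2 v p = 0)
    (heq2 : ∀ p, pd 0 v p * pdd 3 1 w p - pd 1 v p * pdd 3 0 w p
        + pd 0 w p * pdd 1 2 w p - pd 1 w p * pdd 0 2 w p = 0) :
    ∀ p, lie4
        (fun s => ![lam, 0, pd 0 w s, pd 0 v s])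
        (fun s => ![0, lam, pd 1 w s, pd 1 v s]) p = 0 := by
  intro p
  have hdiff : ∀ (j : Fin 4) (g : (Fin 4 → ℝ) → ℝ), ContDiff ℝ 3 g →
      DifferentiableAt ℝ (pd j g) p :=
    fun j g hg => ((pd_contDiff hg j).differentiable (by norm_num)).differentiableAt
  set φV : Fin 4 → (Fin 4 → ℝ) → ℝ := ![fun _ => lam, fun _ => 0, pd 0 w, pd 0 v] with hφV
  set φW : Fin 4 → (Fin 4 → ℝ) → ℝ := ![fun _ => 0, fun _ => lam, pd 1 w, pd 1 v] with hφW
  have hVdef : (fun s => ![lam, 0, pd 0 w s, pd 0 v s]) = fun s i => φV i s := by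
    funext s i; fin_cases i <;> simp [hφV]
  have hWdef : (fun s => ![0, lam, pd 1 w s, pd 1 v s]) = fun s i => φW i s := by
    funext s i; fin_cases i <;> simp [hφW]
  have hφVd : ∀ i, DifferentiableAt ℝ (φV i) p := by
    intro i; fin_cases i
    · exact differentiableAt_const _
    · exact differentiableAt_const _
    · exact hdiff 0 w hw
    · exact hdiff 0 v hv
  have hφWd : ∀ i, DifferentiableAt ℝ (φW i) p := by
    intro i; fin_cases i
    · exact differentiableAt_const _
    · exact differentiableAt_const _
    · exact hdiff 1 w hw
    · exact hdiff 1 v hv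
  have hfV : fderiv ℝ (fun s => ![lam, 0, pd 0 w s, pd 0 v s]) p
      = ContinuousLinearMap.pi fun i => fderiv ℝ (φV i) p := by
    rw [hVdef]; exact fderiv_pi hφVd
  have hfW : fderiv ℝ (fun s => ![0, lam, pd 1 w s, pd 1 v s]) p
      = ContinuousLinearMap.pi fun i => fderiv ℝ (φW i) p := by
    rw [hWdef]; exact fderiv_pi hφWd
  have hpdd : ∀ (i j : Fin 4) (g : (Fin 4 → ℝ) → ℝ),
      fderiv ℝ (pd j g) p (Pi.single i 1) = pdd i j g p := fun _ _ _ => rfl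
  funext k
  rw [lie4, hfV, hfW, Pi.sub_apply, ContinuousLinearMap.pi_apply, ContinuousLinearMap.pi_apply,
    Pi.zero_apply]
  fin_cases k
  · simp [hφV, hφW]
  · simp [hφV, hφW]
  · show fderiv ℝ (pd 1 w) p _ - fderiv ℝ (pd 0 w) p _ = 0
    rw [clm_apply_eq_sum, clm_apply_eq_sum, Fin.sum_univ_four, Fin.sum_univ_four]
    simp only [hpdd, Matrix.cons_val_zero, Matrix.cons_val_one, Matrix.head_cons,
      Matrix.cons_val_two, Matrix.tail_cons, Matrix.cons_val_three]
    have h2 := heq2 p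
    have s01 := pdd_symm hw 0 1 p
    have s21 := pdd_symm hw 2 1 p
    have s20 := pdd_symm hw 2 0 p
    rw [s01, s21, s20]; linarith
  · show fderiv ℝ (pd 1 v) p _ - fderiv ℝ (pd 0 v) p _ = 0
    rw [clm_apply_eq_sum, clm_apply_eq_sum, Fin.sum_univ_four, Fin.sum_univ_four]
    simp only [hpdd, Matrix.cons_val_zero, Matrix.cons_val_one, Matrix.head_cons,
      Matrix.cons_val_two, Matrix.tail_cons, Matrix.cons_val_three]
    have h1 := heq1 p
    have s01 := pdd_symm hv 0 1 p
    have s21 := pdd_symm hv 2 1 p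
    have s20 := pdd_symm hv 2 0 p
    rw [s01, s21, s20]; linarith
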